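/- The polynomial P₁₀ᴱ(T) = (1/7)·[(520+232√5)T⁴ − (320+144√5)T³ − (168+76√5)T² − (30+14√5)T + 5+2√5] satisfies P₁₀ᴱ(99/100) < 0 (indeed P₁₀ᴱ(99/100) = −122341/2500000 − (40154771/87500000)√5) and P₁₀ᴱ(1) = 1 > 0; hence P₁₀ᴱ has a real root α with 99/100 < α < 1. In particular, since 1/√(6+2√5) < 99/100, not all roots of P₁₀ᴱ lie on the circle |T| = 1/√(6+2√5), so the extremal invariant polynomial W₁₀ᴱ does not satisfy the Riemann hypothesis. -/

import Mathlib

/- STATEMENT 12: P₁₀ᴱ(99/100) = -122341/2500000 - (40154771/87500000)√5 < 0 and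
P₁₀ᴱ(1) = 1 > 0, so P₁₀ᴱ has a real root α with 99/100 < α < 1; since
1/√(6+2√5) < 99/100, not all roots of P₁₀ᴱ lie on |T| = 1/√(6+2√5), i.e.
W₁₀ᴱ does not satisfy the Riemann hypothesis. -/

noncomputable section

/-- `P₁₀ᴱ` as a real polynomial. -/
def P10E : Polynomial ℝ :=
  Polynomial.C (1 / 7 : ℝ) *
    (Polynomial.C (520 + 232 * Real.sqrt 5) * Polynomial.X ^ 4
      - Polynomial.C (320 + 144 * Real.sqrt 5) * Polynomial.X ^ 3
      - Polynomial.C (168 + 76 * Real.sqrt 5) * Polynomial.X ^ 2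
      - Polynomial.C (30 + 14 * Real.sqrt 5) * Polynomial.X
      + Polynomial.C (5 + 2 * Real.sqrt 5))

lemma sqrt5_pos : (0:ℝ) < Real.sqrt 5 := Real.sqrt_pos.mpr (by norm_num)

lemma sqrt5_gt_two : (2:ℝ) < Real.sqrt 5 := by
  have := Real.lt_sqrt (x := 2) (y := 5) (by norm_num)
  rw [this]; norm_num

lemma eval99 : P10E.eval (99 / 100 : ℝ)
    = -122341 / 2500000 - (40154771 / 87500000) * Real.sqrt 5 := by
  simp only [P10E, Polynomial.eval_mul, Polynomial.eval_add, Polynomial.eval_sub,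
    Polynomial.eval_pow, Polynomial.eval_C, Polynomial.eval_X]
  ring

lemma eval1 : P10E.eval (1 : ℝ) = 1 := by
  simp only [P10E, Polynomial.eval_mul, Polynomial.eval_add, Polynomial.eval_sub,
    Polynomial.eval_pow, Polynomial.eval_C, Polynomial.eval_X]
  ring

lemma eval99_neg : P10E.eval (99 / 100 : ℝ) < 0 := by
  rw [eval99]
  nlinarith [sqrt5_pos]

lemma sqrt_q : Real.sqrt (6 + 2 * Real.sqrt 5) = 1 + Real.sqrt 5 := by
  have h5 : Real.sqrt 5 ^ 2 = 5 := Real.sq_sqrt (by norm_num)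
  rw [show (6 + 2 * Real.sqrt 5 : ℝ) = (1 + Real.sqrt 5) ^ 2 by nlinarith]
  exact Real.sqrt_sq (by positivity)

lemma invlt99 : 1 / Real.sqrt (6 + 2 * Real.sqrt 5) < 99 / 100 := by
  rw [sqrt_q]
  rw [div_lt_iff₀ (by positivity)]
  nlinarith [sqrt5_gt_two]

theorem P10E_no_RH :
    P10E.eval (99 / 100 : ℝ) = -122341 / 2500000 - (40154771 / 87500000) * Real.sqrt 5 ∧
    P10E.eval (99 / 100 : ℝ) < 0 ∧
    P10E.eval (1 : ℝ) = 1 ∧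
    (∃ α : ℝ, 99 / 100 < α ∧ α < 1 ∧ P10E.eval α = 0) ∧
    1 / Real.sqrt (6 + 2 * Real.sqrt 5) < 99 / 100 ∧
    ¬ (∀ z : ℂ, (P10E.map (algebraMap ℝ ℂ)).IsRoot z →
        ‖z‖ = 1 / Real.sqrt (6 + 2 * Real.sqrt 5)) := by
  obtain ⟨α, hα, hroot⟩ : ∃ α ∈ Set.Ioo (99/100 : ℝ) 1, P10E.eval α = 0 := by
    have hc : ContinuousOn (fun x => P10E.eval x) (Set.Icc (99/100 : ℝ) 1) :=
      P10E.continuous_aeval.continuousOn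
    have := intermediate_value_Ioo (by norm_num : (99/100 : ℝ) ≤ 1) hc
    have h0 : (0:ℝ) ∈ Set.Ioo (P10E.eval (99/100 : ℝ)) (P10E.eval 1) := by
      constructor
      · exact eval99_neg
      · rw [eval1]; norm_num
    obtain ⟨α, hα, hev⟩ := this h0
    exact ⟨α, hα, hev⟩
  refine ⟨eval99, eval99_neg, eval1, ⟨α, hα.1, hα.2, hroot⟩, invlt99, ?_⟩
  intro h
  have hz : (P10E.map (algebraMap ℝ ℂ)).IsRoot (α : ℂ) := by
    rw [Polynomial.IsRoot, Polynomial.eval_map, ← Polynomial.aeval_def,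
      show ((α:ℂ)) = algebraMap ℝ ℂ α from rfl, Polynomial.aeval_algebraMap_apply]
    simp [hroot]
  have habs := h _ hz
  rw [Complex.norm_real, Real.norm_eq_abs, abs_of_pos (by linarith [hα.1] : (0:ℝ) < α)] at habs
  have h2 := invlt99
  rw [← habs] at h2
  linarith [hα.1]

end
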